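/- The cost c(x₁,…,x_l) = Σᵢ σᵢ |xᵢ - x̄|² with all σᵢ > 0 is (1,l)-non-degenerate: the mixed second derivative D²_{x₁ x_l} c, as a linear map ℝⁿ → ℝⁿ, is injective (indeed it equals a nonzero scalar multiple of the identity). -/

import Mathlib

open Finset



/-- The gradient of `c` in the `i`-th block of variables, at the point `q`. -/
noncomputable def gradBlock {n l : ℕ}
    (c : (Fin l → EuclideanSpace ℝ (Fin n)) → ℝ) (i : Fin l)
    (q : Fin l → EuclideanSpace ℝ (Fin n)) : EuclideanSpace ℝ (Fin n) :=
  gradient (fun z => c (Function.update q i z)) (q i)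

/-- The mixed second derivative `D²_{x_i x_j} c` at `p`, as a linear map ℝⁿ → ℝⁿ. -/
noncomputable def mixedD {n l : ℕ}
    (c : (Fin l → EuclideanSpace ℝ (Fin n)) → ℝ) (i j : Fin l)
    (p : Fin l → EuclideanSpace ℝ (Fin n)) :
    EuclideanSpace ℝ (Fin n) →L[ℝ] EuclideanSpace ℝ (Fin n) :=
  fderiv ℝ (fun xj => gradBlock c i (Function.update p j xj)) (p j)

lemma gradBlock_formula (σ : Fin l → ℝ) (hS : (∑ k, σ k) ≠ 0)
    (c : (Fin l → EuclideanSpace ℝ (Fin n)) → ℝ)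
    (hc : ∀ x, c x = ∑ i, σ i * ‖x i - (∑ k, σ k)⁻¹ • ∑ k, σ k • x k‖ ^ 2)
    (i0 : Fin l) (q : Fin l → EuclideanSpace ℝ (Fin n)) :
    gradBlock c i0 q =
      (2 * σ i0) • q i0 - (2 * σ i0 / (∑ k, σ k)) • ∑ k, σ k • q k := by
  set S : ℝ := ∑ k, σ k with hSdef
  set a : EuclideanSpace ℝ (Fin n) := q i0
  set m : EuclideanSpace ℝ (Fin n) := ∑ k ∈ univ.erase i0, σ k • q k with hm
  have hsum : ∀ z : EuclideanSpace ℝ (Fin n), ∑ k, σ k • Function.update q i0 z k = σ i0 • z + m := by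
    intro z
    rw [← Finset.add_sum_erase _ _ (Finset.mem_univ i0)]
    simp only [Function.update_self, hm]
    congr 1
    refine Finset.sum_congr rfl fun k hk => ?_
    rw [Function.update_of_ne (Finset.ne_of_mem_erase hk)]
  -- α i
  set α : Fin l → ℝ := fun i => (if i = i0 then (1:ℝ) else 0) - σ i0 / S with hα
  set g : Fin l → EuclideanSpace ℝ (Fin n) → EuclideanSpace ℝ (Fin n) := fun i z =>
    Function.update q i0 z i - S⁻¹ • ∑ k, σ k • Function.update q i0 z k with hg
  have hgderiv : ∀ i : Fin l,
      HasFDerivAt (g i) ((α i) • ContinuousLinearMap.id ℝ (EuclideanSpace ℝ (Fin n))) a := by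
    intro i
    have h1 : g i = fun z =>
        (if i = i0 then z else q i) - S⁻¹ • (σ i0 • z + m) := by
      funext z
      simp only [hg, hsum z]
      by_cases h : i = i0
      · subst h; simp
      · rw [Function.update_of_ne h]; simp [h]
    rw [h1]
    by_cases h : i = i0
    · subst h
      simp only [if_pos rfl]
      have := (hasFDerivAt_id (𝕜 := ℝ) a).sub
        (((hasFDerivAt_id (𝕜 := ℝ) a).const_smul (σ i)).add_const m |>.const_smul S⁻¹)
      refine this.congr_fderiv ?_
      ext x
      simp [hα, smul_smul, sub_smul, div_eq_inv_mul, mul_comm]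
    · simp only [if_neg h]
      have := ((hasFDerivAt_const (q i) a).sub
        (((hasFDerivAt_id (𝕜 := ℝ) a).const_smul (σ i0)).add_const m |>.const_smul S⁻¹))
      refine this.congr_fderiv ?_
      ext x
      simp [hα, h, smul_smul, sub_smul, div_eq_inv_mul, mul_comm]
  have hterm : ∀ i : Fin l, HasFDerivAt (fun z => σ i * ‖g i z‖ ^ 2)
      ((2 * σ i * α i) • (innerSL ℝ (g i a))) a := by
    intro i
    have h2 := ((hgderiv i).norm_sq).const_mul (σ i)
    refine h2.congr_fderiv ?_
    ext x
    simp [real_inner_smul_right]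
    ring
  have htotal : HasFDerivAt (fun z => c (Function.update q i0 z))
      (∑ i, (2 * σ i * α i) • (innerSL ℝ (g i a))) a := by
    have heq : (fun z => c (Function.update q i0 z)) = fun z => ∑ i, σ i * ‖g i z‖ ^ 2 := by
      funext z; rw [hc]
    rw [heq]
    exact HasFDerivAt.fun_sum (fun i _ => hterm i)
  set T : EuclideanSpace ℝ (Fin n) := ∑ k, σ k • q k with hT
  have hga : ∀ i, g i a = q i - S⁻¹ • T := by
    intro i; simp [hg, a, T, Function.update_eq_self]
  have h0 : ∑ i, σ i • (g i a) = 0 := by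
    have h1 : ∑ i, σ i • (g i a) = (∑ i, σ i • q i) - (∑ i, σ i) • (S⁻¹ • T) := by
      simp only [hga, smul_sub]
      rw [Finset.sum_sub_distrib, ← Finset.sum_smul]
    rw [h1, smul_smul, ← hSdef, mul_inv_cancel₀ hS, one_smul, ← hT, sub_self]
  have hGvec : ∑ i, (2 * σ i * α i) • (g i a) =
      (2 * σ i0) • q i0 - (2 * σ i0 / S) • T := by
    calc ∑ i, (2 * σ i * α i) • (g i a)
        = ∑ i, ((if i = i0 then (2 * σ i) • g i a else 0)
            - (2 * σ i0 / S) • (σ i • g i a)) := by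
          refine Finset.sum_congr rfl fun i _ => ?_
          by_cases h : i = i0 <;> simp only [hα, h, if_pos, if_neg, ite_true, ite_false] <;>
            module
      _ = (2 * σ i0) • g i0 a - (2 * σ i0 / S) • ∑ i, σ i • g i a := by
          rw [Finset.sum_sub_distrib, Finset.sum_ite_eq' Finset.univ i0]
          simp [Finset.smul_sum]
      _ = (2 * σ i0) • (q i0 - S⁻¹ • T) - 0 := by rw [hga, h0, smul_zero]
      _ = (2 * σ i0) • q i0 - (2 * σ i0 / S) • T := by module
  have hdual : (∑ i, (2 * σ i * α i) • (innerSL ℝ (g i a)))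
      = InnerProductSpace.toDual ℝ (EuclideanSpace ℝ (Fin n)) ((2 * σ i0) • q i0 - (2 * σ i0 / S) • T) := by
    rw [← hGvec]
    ext x
    simp [InnerProductSpace.toDual_apply_apply, sum_inner, real_inner_smul_left]
  have hgrad : HasGradientAt (fun z => c (Function.update q i0 z))
      ((2 * σ i0) • q i0 - (2 * σ i0 / S) • T) a :=
    hasGradientAt_iff_hasFDerivAt.mpr (hdual ▸ htotal)
  exact hgrad.gradient

/-- The weighted barycentric cost is `(1,l)`-non-degenerate: `D²_{x₁ x_l} c` is
a nonzero scalar multiple of the identity, hence injective. -/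
theorem stmt4 {n l : ℕ} (hl : 2 ≤ l) (σ : Fin l → ℝ) (hσ : ∀ i, 0 < σ i)
    (c : (Fin l → EuclideanSpace ℝ (Fin n)) → ℝ)
    (hc : ∀ x, c x = ∑ i, σ i * ‖x i - (∑ k, σ k)⁻¹ • ∑ k, σ k • x k‖ ^ 2)
    (p : Fin l → EuclideanSpace ℝ (Fin n)) :
    mixedD c ⟨0, by omega⟩ ⟨l - 1, by omega⟩ p =
        (-2 * σ ⟨0, by omega⟩ * σ ⟨l - 1, by omega⟩ / ∑ k, σ k) •
          ContinuousLinearMap.id ℝ (EuclideanSpace ℝ (Fin n)) ∧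
      -2 * σ ⟨0, by omega⟩ * σ ⟨l - 1, by omega⟩ / ∑ k, σ k ≠ 0 ∧
      Function.Injective ⇑(mixedD c ⟨0, by omega⟩ ⟨l - 1, by omega⟩ p) := by
  unfold mixedD
  have hS : (0:ℝ) < ∑ k, σ k :=
    Finset.sum_pos (fun i _ => hσ i) ⟨⟨0, by omega⟩, Finset.mem_univ _⟩
  set i0 : Fin l := ⟨0, by omega⟩ with hi0
  set j : Fin l := ⟨l - 1, by omega⟩ with hj
  have hij : i0 ≠ j := by
    intro h
    have := congrArg Fin.val h
    simp [hi0, hj] at this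
    omega
  have key : HasFDerivAt (fun xj => gradBlock c i0 (Function.update p j xj))
      ((-2 * σ i0 * σ j / ∑ k, σ k) •
        ContinuousLinearMap.id ℝ (EuclideanSpace ℝ (Fin n))) (p j) := by
    have heq : (fun xj => gradBlock c i0 (Function.update p j xj)) =
        fun xj : EuclideanSpace ℝ (Fin n) =>
          (2 * σ i0) • p i0 - (2 * σ i0 / ∑ k, σ k) •
            (σ j • xj + ∑ k ∈ Finset.univ.erase j, σ k • p k) := by
      funext xj
      rw [gradBlock_formula σ hS.ne' c hc i0]
      have hsum2 : ∑ k, σ k • Function.update p j xj k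
          = σ j • xj + ∑ k ∈ Finset.univ.erase j, σ k • p k := by
        conv_lhs => rw [← Finset.add_sum_erase _
          (fun k => σ k • Function.update p j xj k) (Finset.mem_univ j)]
        rw [Function.update_self]
        congr 1
        exact Finset.sum_congr rfl fun k hk => by
          rw [Function.update_of_ne (Finset.ne_of_mem_erase hk)]
      rw [Function.update_of_ne hij, hsum2]
    rw [heq]
    have h2 := (((hasFDerivAt_id (𝕜 := ℝ) (p j)).const_smul (σ j)).add_const
      (∑ k ∈ Finset.univ.erase j, σ k • p k)).const_smul
      (2 * σ i0 / ∑ k, σ k) |>.const_sub ((2 * σ i0) • p i0)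
    refine h2.congr_fderiv ?_
    ext x
    simp [smul_smul]
    ring
  have hne : -2 * σ i0 * σ j / ∑ k, σ k ≠ 0 :=
    div_ne_zero (mul_ne_zero (mul_ne_zero (by norm_num) (hσ i0).ne') (hσ j).ne') hS.ne'
  refine ⟨key.fderiv, hne, ?_⟩
  rw [key.fderiv]
  intro x y hxy
  simp only [ContinuousLinearMap.coe_smul', Pi.smul_apply,
    ContinuousLinearMap.coe_id', id_eq] at hxy
  exact smul_right_injective _ hne hxy
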